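/- arXiv:1211.4517 — 3 statements merged into one kernel-verified Lean document; each statement's English description precedes it below -/
import Mathlib

section
/- Let (A,I) be a finite independence alphabet and let φ be an endomorphism of the trace monoid M(A,I) satisfying: for all letters a,b,c ∈ A, if c is a prefix of φ(b) and c ∼_I φ(a), then (a,b) ∈ I. If w_{B₁}⋯w_{B_p} is a Foata normal form and k ≤ p, then r(φ(w_{B₁}⋯w_{B_k}), φ(w_{B₁}⋯w_{B_p})) ≥ k, where r measures the length of the longest common prefix of Foata normal forms. -/
/-- The defining relation of the trace monoid: `ab = ba` whenever `(a,b) ∈ I`. -/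
def traceRel (A : Type) (I : A → A → Prop) : FreeMonoid A → FreeMonoid A → Prop :=
  fun x y => ∃ a b : A, I a b ∧ x = FreeMonoid.of a * FreeMonoid.of b ∧
    y = FreeMonoid.of b * FreeMonoid.of a

/-- The congruence on the free monoid generated by the trace relations. -/
def traceCon (A : Type) (I : A → A → Prop) : Con (FreeMonoid A) :=
  conGen (traceRel A I)

/-- The trace monoid `M(A,I)`, the quotient of the free monoid on `A` by the
congruence generated by `{(ab, ba) : (a,b) ∈ I}`. -/
abbrev TraceMonoid (A : Type) (I : A → A → Prop) := (traceCon A I).Quotient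



/-- The image in the trace monoid of a letter `a ∈ A`. -/
def traceOf (A : Type) (I : A → A → Prop) (a : A) : TraceMonoid A I :=
  (traceCon A I).mk' (FreeMonoid.of a)

/-- The set of letters which are periodic points of the endomorphism `φ`. -/
def perLetters (A : Type) (I : A → A → Prop) (φ : Monoid.End (TraceMonoid A I)) : Set A :=
  {a : A | ∃ n : ℕ, 1 ≤ n ∧ (φ ^ n) (traceOf A I a) = traceOf A I a}

/-- A clique of the independence graph: a nonempty set of letters that pairwise
commute (are pairwise independent). -/
def IsClique (A : Type) (I : A → A → Prop) (B : Finset A) : Prop :=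
  B.Nonempty ∧ ∀ a ∈ B, ∀ b ∈ B, a ≠ b → I a b

/-- `w_B`: the product in the trace monoid of all letters of `B`. -/
noncomputable def wB (A : Type) (I : A → A → Prop) (B : Finset A) : TraceMonoid A I :=
  (B.toList.map (traceOf A I)).prod

/-- The product `w_{B₁} ⋯ w_{B_k}` associated with a list of cliques. -/
noncomputable def wProd (A : Type) (I : A → A → Prop) (L : List (Finset A)) :
    TraceMonoid A I :=
  (L.map (wB A I)).prod

/-- A list `[B₁, …, B_k]` is a Foata chain if each `B_i` is a clique and, for every
`i ≥ 2` and every `a ∈ B_i`, there is some `b ∈ B_{i-1}` with `(a,b) ∉ I`. -/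
def IsFoataChain (A : Type) (I : A → A → Prop) (L : List (Finset A)) : Prop :=
  (∀ B ∈ L, IsClique A I B) ∧
    ∀ i : ℕ, (hi : i + 1 < L.length) →
      ∀ a ∈ L[i + 1], ∃ b ∈ L[i], ¬ I a b

/-- `[B₁, …, B_k]` is the Foata normal form of `u` if it is a Foata chain whose
product is `u`. (Such a list exists and is unique for every `u`.) -/
def IsFNF (A : Type) (I : A → A → Prop) (L : List (Finset A)) (u : TraceMonoid A I) :
    Prop :=
  IsFoataChain A I L ∧ u = wProd A I L

/-- For `u ≠ v`, `rNat u v` is the largest `k` such that the Foata normal forms of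
`u` and `v` have the same first `k` components. -/
noncomputable def rNat (A : Type) (I : A → A → Prop) (u v : TraceMonoid A I) : ℕ :=
  sSup {k : ℕ | ∃ P Lu Lv : List (Finset A), P.length = k ∧
    IsFNF A I (P ++ Lu) u ∧ IsFNF A I (P ++ Lv) v}

open Classical

/-- `r(u,v) ∈ ℕ ∪ {∞}`: the length of the longest common prefix of the Foata normal
forms of `u` and `v`, with `r(u,u) = ∞`. -/
noncomputable def rE (A : Type) (I : A → A → Prop) (u v : TraceMonoid A I) : ℕ∞ :=
  if u = v then ⊤ else (rNat A I u v : ℕ∞)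

/-- The Foata normal form metric: `d(u,v) = 2^{-r(u,v)}`, with `2^{-∞} = 0`. -/
noncomputable def dFNF (A : Type) (I : A → A → Prop) (u v : TraceMonoid A I) : ℝ :=
  if u = v then 0 else (2 : ℝ) ^ (-(rNat A I u v : ℤ))

/-- The content of a trace: the set of letters occurring in (any representative of) it. -/
def content (A : Type) (I : A → A → Prop) (u : TraceMonoid A I) : Set A :=
  {a : A | ∃ w : FreeMonoid A, (traceCon A I).mk' w = u ∧ a ∈ FreeMonoid.toList w}

section Aux
open Classical
variable {A : Type} {I : A → A → Prop}

local notation "ι" => traceOf A I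

lemma traceOf_comm {a b : A} (h : I a b) : ι a * ι b = ι b * ι a := by
  have h2 : (traceCon A I).mk' (.of a * .of b) = (traceCon A I).mk' (.of b * .of a) :=
    (Con.eq _).2 (ConGen.Rel.of _ _ ⟨a, b, h, rfl, rfl⟩)
  simpa [traceOf, map_mul] using h2

lemma commute_traceOf {a b : A} (h : I a b) : Commute (ι a) (ι b) := traceOf_comm h

/-- multiset-content homomorphism -/
noncomputable def mcont (A : Type) (I : A → A → Prop) :
    TraceMonoid A I →* Multiplicative (Multiset A) :=
  (traceCon A I).lift (FreeMonoid.lift (fun a => Multiplicative.ofAdd ({a} : Multiset A)))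
    (by
      refine Con.conGen_le.2 ?_
      rintro x y ⟨a, b, h, rfl, rfl⟩
      simp only [Con.ker_rel, map_mul, FreeMonoid.lift_eval_of]
      rw [← ofAdd_add, ← ofAdd_add, add_comm])

lemma mcont_mk (w : FreeMonoid A) :
    Multiplicative.toAdd (mcont A I ((traceCon A I).mk' w)) = (↑(FreeMonoid.toList w) : Multiset A) := by
  show Multiplicative.toAdd ((FreeMonoid.lift fun a => Multiplicative.ofAdd ({a} : Multiset A)) w) = _
  induction w using FreeMonoid.recOn with
  | one => simp
  | of_mul x xs ih => simp [map_mul, ih]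

lemma mem_content_iff {u : TraceMonoid A I} {a : A} :
    a ∈ content A I u ↔ a ∈ Multiplicative.toAdd (mcont A I u) := by
  constructor
  · rintro ⟨w, rfl, ha⟩
    rw [mcont_mk]
    simpa using ha
  · intro h
    obtain ⟨w, rfl⟩ := Con.mk'_surjective (c := traceCon A I) u
    rw [mcont_mk] at h
    exact ⟨w, rfl, by simpa using h⟩

lemma content_one {a : A} : a ∉ content A I (1 : TraceMonoid A I) := by
  rw [mem_content_iff]
  simp

/-- length of a trace -/
noncomputable def tlen (u : TraceMonoid A I) : ℕ :=
  Multiset.card (Multiplicative.toAdd (mcont A I u))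

lemma tlen_mul (u v : TraceMonoid A I) : tlen (u * v) = tlen u + tlen v := by
  unfold tlen; rw [map_mul]; simp

lemma tlen_traceOf (a : A) : tlen (ι a) = 1 := by
  unfold tlen
  rw [show ι a = (traceCon A I).mk' (.of a) from rfl, mcont_mk]
  simp

lemma pairwise_commute_toList {B : Finset A} (hB : IsClique A I B) :
    (B.toList.map ι).Pairwise Commute := by
  rw [List.pairwise_map]
  refine (B.nodup_toList).pairwise_of_forall_ne ?_
  intro a ha b hb hne
  exact commute_traceOf (hB.2 a (by simpa using ha) b (by simpa using hb) hne)

lemma wB_eq_of_mem {B : Finset A} (hB : IsClique A I B) {c : A} (hc : c ∈ B) :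
    wB A I B = ι c * wB A I (B.erase c) := by
  have hperm : B.toList.Perm (c :: (B.erase c).toList) := by
    have h1 : B.toList = (insert c (B.erase c)).toList := by rw [Finset.insert_erase hc]
    rw [h1]
    exact Finset.toList_insert (Finset.notMem_erase c B)
  have := (hperm.map ι).prod_eq' (pairwise_commute_toList hB)
  simpa [wB] using this
end Aux
section Ins
open Classical
variable {A : Type} {I : A → A → Prop}
local notation "ι" => traceOf A I

/-- x has a dependency in B -/
def dep (I : A → A → Prop) (x : A) (B : Finset A) : Prop := ∃ b ∈ B, ¬ I x b

open Classical in
/-- insert a letter into a reversed Foata chain -/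
noncomputable def insR (I : A → A → Prop) (x : A) : List (Finset A) → List (Finset A)
  | [] => [{x}]
  | [B] => if dep I x B then [{x}, B] else [insert x B]
  | B :: C :: M => if dep I x B then {x} :: B :: C :: M
      else if dep I x C then (insert x B) :: C :: M
      else B :: insR I x (C :: M)

/-- reversed Foata chain -/
def RFoata (A : Type) (I : A → A → Prop) (R : List (Finset A)) : Prop :=
  (∀ B ∈ R, IsClique A I B) ∧ List.IsChain (fun B C => ∀ a ∈ B, dep I a C) R

/-- x occurs at level s+1 counted from the bottom, i.e. reverse-index s -/
def OccAt (R : List (Finset A)) (x : A) (s : ℕ) : Prop :=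
  ∃ B, R.reverse[s]? = some B ∧ x ∈ B

lemma not_dep_iff {x : A} {B : Finset A} : ¬ dep I x B ↔ ∀ b ∈ B, I x b := by
  unfold dep; push_neg; simp

lemma wProd_append (L₁ L₂ : List (Finset A)) :
    wProd A I (L₁ ++ L₂) = wProd A I L₁ * wProd A I L₂ := by
  unfold wProd; rw [List.map_append, List.prod_append]

lemma wProd_reverse_cons (B : Finset A) (L : List (Finset A)) :
    wProd A I ((B :: L).reverse) = wProd A I L.reverse * wB A I B := by
  rw [List.reverse_cons, wProd_append]
  simp [wProd]

lemma commute_wB {x : A} {B : Finset A} (h : ∀ b ∈ B, I x b) :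
    Commute (ι x) (wB A I B) := by
  refine Commute.list_prod_right _ _ ?_
  intro y hy
  simp only [List.mem_map] at hy
  obtain ⟨b, hb, rfl⟩ := hy
  exact commute_traceOf (h b (by simpa using hb))

lemma not_mem_of_not_dep (hirr : Irreflexive I) {x : A} {B : Finset A}
    (h : ∀ b ∈ B, I x b) : x ∉ B := fun hx => hirr x (h x hx)

lemma clique_insert (hsym : Symmetric I) (hirr : Irreflexive I) {x : A} {B : Finset A}
    (hB : IsClique A I B) (h : ∀ b ∈ B, I x b) : IsClique A I (insert x B) := by
  constructor
  · exact Finset.insert_nonempty x B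
  · intro a ha b hb hab
    rcases Finset.mem_insert.1 ha with ha | ha
    · rcases Finset.mem_insert.1 hb with hb | hb
      · exact absurd (ha.trans hb.symm) hab
      · rw [ha]; exact h b hb
    · rcases Finset.mem_insert.1 hb with hb | hb
      · rw [hb]; exact hsym (h a ha)
      · exact hB.2 a ha b hb hab

lemma wB_insert (hirr : Irreflexive I) {x : A} {B : Finset A}
    (hB : IsClique A I B) (h : ∀ b ∈ B, I x b) :
    wB A I (insert x B) = wB A I B * ι x := by
  have hx : x ∉ B := not_mem_of_not_dep hirr h
  have hperm : ((insert x B).toList.map ι).Perm ((x :: B.toList).map ι) :=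
    (Finset.toList_insert hx).map ι
  have hpw : ((insert x B).toList.map ι).Pairwise Commute := by
    rw [List.pairwise_map]
    refine (Finset.nodup_toList _).pairwise_of_forall_ne ?_
    intro a ha b hb hne
    have ha' := Finset.mem_toList.1 ha
    have hb' := Finset.mem_toList.1 hb
    rcases Finset.mem_insert.1 ha' with ha' | ha'
    · rcases Finset.mem_insert.1 hb' with hb' | hb'
      · exact absurd (ha'.trans hb'.symm) hne
      · rw [ha']; exact commute_traceOf (h b hb')
    · rcases Finset.mem_insert.1 hb' with hb' | hb'
      · rw [hb']; exact (commute_traceOf (h a ha')).symm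
      · exact commute_traceOf (hB.2 a ha' b hb' hne)
  have := hperm.prod_eq' hpw
  have hcomm : Commute (ι x) (wB A I B) := commute_wB h
  calc wB A I (insert x B) = (((x :: B.toList)).map ι).prod := this
  _ = ι x * wB A I B := by simp [wB]
  _ = wB A I B * ι x := hcomm.eq
end Ins
section InsLemmas
open Classical
variable {A : Type} {I : A → A → Prop}
local notation "ι" => traceOf A I

lemma dep_mono {x : A} {B B' : Finset A} (h : B ⊆ B') (hd : dep I x B) : dep I x B' := by
  obtain ⟨b, hb, hnb⟩ := hd; exact ⟨b, h hb, hnb⟩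

lemma occAt_lt_length {R : List (Finset A)} {x : A} {s : ℕ} (h : OccAt R x s) :
    s < R.length := by
  obtain ⟨B, hB, -⟩ := h
  obtain ⟨h, -⟩ := List.getElem?_eq_some_iff.1 hB
  simpa using h

lemma occAt_nil {x : A} {s : ℕ} (h : OccAt ([] : List (Finset A)) x s) : False := by
  have := occAt_lt_length h; simp at this

lemma occAt_cons_self {x : A} {B : Finset A} {L : List (Finset A)} (hx : x ∈ B) :
    OccAt (B :: L) x L.length := by
  refine ⟨B, ?_, hx⟩
  rw [List.reverse_cons]
  simpa using List.getElem?_concat_length L.reverse B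

lemma occAt_cons_of_lt {x : A} {B : Finset A} {L : List (Finset A)} {s : ℕ}
    (hs : s < L.length) : OccAt (B :: L) x s ↔ OccAt L x s := by
  unfold OccAt
  rw [List.reverse_cons, List.getElem?_append]
  simp [hs]

lemma occAt_cons_cases {x : A} {B : Finset A} {L : List (Finset A)} {s : ℕ}
    (h : OccAt (B :: L) x s) : (s = L.length ∧ x ∈ B) ∨ (s < L.length ∧ OccAt L x s) := by
  have hlt := occAt_lt_length h
  simp only [List.length_cons] at hlt
  rcases Nat.lt_or_ge s L.length with hs | hs
  · exact Or.inr ⟨hs, (occAt_cons_of_lt hs).1 h⟩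
  · have hse : s = L.length := by omega
    subst hse
    obtain ⟨C, hC, hxC⟩ := h
    rw [List.reverse_cons] at hC
    rw [List.getElem?_append_right (by simp)] at hC
    simp at hC
    exact Or.inl ⟨rfl, hC ▸ hxC⟩

lemma occAt_cons {x : A} {B : Finset A} {L : List (Finset A)} {s : ℕ}
    (h : OccAt L x s) : OccAt (B :: L) x s :=
  (occAt_cons_of_lt (occAt_lt_length h)).2 h

lemma occAt_cons_subset {x : A} {B B' : Finset A} {L : List (Finset A)} {s : ℕ}
    (hBB : B ⊆ B') (h : OccAt (B :: L) x s) : OccAt (B' :: L) x s := by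
  rcases occAt_cons_cases h with ⟨rfl, hx⟩ | ⟨hs, h⟩
  · exact occAt_cons_self (hBB hx)
  · exact occAt_cons h

lemma take_reverse_cons {B : Finset A} {L : List (Finset A)} {m : ℕ} (h : m ≤ L.length) :
    ((B :: L).reverse).take m = L.reverse.take m := by
  rw [List.reverse_cons, List.take_append_of_le_length (by simpa using h)]

lemma insR_length_le (x : A) (R : List (Finset A)) : R.length ≤ (insR I x R).length := by
  induction R using insR.induct I x with
  | case1 => simp [insR]
  | case2 B h => simp [insR, h]
  | case3 B h => simp [insR, h]
  | case4 B C M h => simp [insR, h]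
  | case5 B C M h1 h2 => simp [insR, h1, h2]
  | case6 B C M h1 h2 ih => simp only [insR, if_neg h1, if_neg h2, List.length_cons] at *; omega

lemma occAt_insR (y : A) {R : List (Finset A)} {x : A} {s : ℕ} (h : OccAt R x s) :
    ∃ s', s ≤ s' ∧ OccAt (insR I y R) x s' := by
  induction R using insR.induct I y with
  | case1 => exact absurd h occAt_nil
  | case2 B hd =>
    rcases occAt_cons_cases h with ⟨rfl, hx⟩ | ⟨hs, h'⟩
    · exact ⟨0, le_refl _, by simp only [insR, if_pos hd]; exact occAt_cons (occAt_cons_self hx)⟩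
    · exact absurd h' occAt_nil
  | case3 B hd =>
    rcases occAt_cons_cases h with ⟨rfl, hx⟩ | ⟨hs, h'⟩
    · exact ⟨0, le_refl _, by
        simp only [insR, if_neg hd]
        exact occAt_cons_self (Finset.mem_insert_of_mem hx)⟩
    · exact absurd h' occAt_nil
  | case4 B C M hd =>
    exact ⟨s, le_refl _, by simp only [insR, if_pos hd]; exact occAt_cons h⟩
  | case5 B C M h1 h2 =>
    exact ⟨s, le_refl _, by
      simp only [insR, if_neg h1, if_pos h2]
      exact occAt_cons_subset (Finset.subset_insert y B) h⟩
  | case6 B C M h1 h2 ih =>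
    simp only [insR, if_neg h1, if_neg h2]
    rcases occAt_cons_cases h with ⟨rfl, hx⟩ | ⟨hs, h'⟩
    · refine ⟨(insR I y (C :: M)).length, insR_length_le y _, occAt_cons_self hx⟩
    · obtain ⟨s', hs', h''⟩ := ih h'
      exact ⟨s', hs', occAt_cons h''⟩

lemma occAt_insR_self (x : A) (R : List (Finset A)) :
    ∃ s, OccAt (insR I x R) x s := by
  induction R using insR.induct I x with
  | case1 => exact ⟨0, by simp only [insR]; exact occAt_cons_self (Finset.mem_singleton_self x)⟩
  | case2 B hd =>
    refine ⟨1, ?_⟩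
    simp only [insR, if_pos hd]
    have : ([B] : List (Finset A)).length = 1 := rfl
    exact this ▸ occAt_cons_self (L := [B]) (Finset.mem_singleton_self x)
  | case3 B hd =>
    exact ⟨0, by simp only [insR, if_neg hd]; exact occAt_cons_self (Finset.mem_insert_self x B)⟩
  | case4 B C M hd =>
    exact ⟨(B :: C :: M).length, by
      simp only [insR, if_pos hd]
      exact occAt_cons_self (Finset.mem_singleton_self x)⟩
  | case5 B C M h1 h2 =>
    exact ⟨(C :: M).length, by
      simp only [insR, if_neg h1, if_pos h2]
      exact occAt_cons_self (Finset.mem_insert_self x B)⟩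
  | case6 B C M h1 h2 ih =>
    obtain ⟨s, hs⟩ := ih
    exact ⟨s, by simp only [insR, if_neg h1, if_neg h2]; exact occAt_cons hs⟩

lemma insR_head_of_not_dep {x : A} {C : Finset A} {M : List (Finset A)} (h : ¬ dep I x C) :
    ∃ C' M', insR I x (C :: M) = C' :: M' ∧ C ⊆ C' := by
  match M with
  | [] => exact ⟨insert x C, [], by simp [insR, h], Finset.subset_insert x C⟩
  | D :: M' =>
    by_cases hD : dep I x D
    · exact ⟨insert x C, D :: M', by simp [insR, h, hD], Finset.subset_insert x C⟩
    · exact ⟨C, insR I x (D :: M'), by simp [insR, h, hD], subset_refl C⟩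

lemma rfoata_insR (hsym : Symmetric I) (hirr : Irreflexive I) {R : List (Finset A)}
    (hR : RFoata A I R) (x : A) : RFoata A I (insR I x R) := by
  have hsing : IsClique A I {x} := ⟨Finset.singleton_nonempty x, by
    intro a ha b hb hab
    simp only [Finset.mem_singleton] at ha hb
    exact absurd (ha.trans hb.symm) hab⟩
  induction R using insR.induct I x with
  | case1 =>
    simp only [insR]
    exact ⟨by simpa using hsing, List.isChain_singleton _⟩
  | case2 B hd =>
    simp only [insR, if_pos hd]
    obtain ⟨hcl, -⟩ := hR
    refine ⟨?_, ?_⟩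
    · intro D hD
      rcases List.mem_cons.1 hD with rfl | hD
      · exact hsing
      · simp at hD; exact hD ▸ hcl B (by simp)
    · rw [List.isChain_cons_cons]
      refine ⟨?_, List.isChain_singleton _⟩
      intro a ha
      simp only [Finset.mem_singleton] at ha
      exact ha ▸ hd
  | case3 B hd =>
    simp only [insR, if_neg hd]
    obtain ⟨hcl, -⟩ := hR
    refine ⟨?_, List.isChain_singleton _⟩
    intro D hD
    simp at hD
    exact hD ▸ clique_insert hsym hirr (hcl B (by simp)) (not_dep_iff.1 hd)
  | case4 B C M hd =>
    simp only [insR, if_pos hd]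
    obtain ⟨hcl, hch⟩ := hR
    refine ⟨?_, ?_⟩
    · intro D hD
      rcases List.mem_cons.1 hD with rfl | hD
      · exact hsing
      · exact hcl D hD
    · rw [List.isChain_cons_cons]
      refine ⟨?_, hch⟩
      intro a ha
      simp only [Finset.mem_singleton] at ha
      exact ha ▸ hd
  | case5 B C M h1 h2 =>
    obtain ⟨hcl, hch⟩ := hR
    rw [List.isChain_cons_cons] at hch
    simp only [insR, if_neg h1, if_pos h2]
    refine ⟨?_, ?_⟩
    · intro D hD
      rcases List.mem_cons.1 hD with rfl | hD
      · exact clique_insert hsym hirr (hcl B (by simp)) (not_dep_iff.1 h1)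
      · exact hcl D (List.mem_cons_of_mem _ hD)
    · rw [List.isChain_cons_cons]
      refine ⟨?_, hch.2⟩
      intro a ha
      rcases Finset.mem_insert.1 ha with ha | ha
      · exact ha ▸ h2
      · exact hch.1 a ha
  | case6 B C M h1 h2 ih =>
    obtain ⟨hcl, hch⟩ := hR
    rw [List.isChain_cons_cons] at hch
    have hR' : RFoata A I (C :: M) := ⟨fun D hD => hcl D (by simp [hD]), hch.2⟩
    have ihh := ih hR'
    simp only [insR, if_neg h1, if_neg h2]
    obtain ⟨C', M', heq, hCC⟩ := insR_head_of_not_dep (M := M) h2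
    refine ⟨?_, ?_⟩
    · intro D hD
      rcases List.mem_cons.1 hD with rfl | hD
      · exact hcl _ List.mem_cons_self
      · exact ihh.1 D hD
    · rw [heq, List.isChain_cons_cons]
      refine ⟨?_, heq ▸ ihh.2⟩
      intro a ha
      exact dep_mono hCC (hch.1 a ha)

lemma wProd_insR (hirr : Irreflexive I) {R : List (Finset A)}
    (hR : ∀ B ∈ R, IsClique A I B) (x : A) :
    wProd A I ((insR I x R).reverse) = wProd A I R.reverse * ι x := by
  induction R using insR.induct I x with
  | case1 => simp [insR, wProd, wB]
  | case2 B hd =>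
    simp only [insR, if_pos hd]
    rw [wProd_reverse_cons, wProd_reverse_cons]
    congr 1
    simp [wB]
  | case3 B hd =>
    simp only [insR, if_neg hd]
    rw [wProd_reverse_cons, wProd_reverse_cons]
    rw [wB_insert hirr (hR B (by simp)) (not_dep_iff.1 hd)]
    rw [← mul_assoc]
  | case4 B C M hd =>
    simp only [insR, if_pos hd]
    rw [wProd_reverse_cons]
    congr 1
    simp [wB]
  | case5 B C M h1 h2 =>
    simp only [insR, if_neg h1, if_pos h2]
    simp only [wProd_reverse_cons]
    rw [wB_insert hirr (hR B (by simp)) (not_dep_iff.1 h1), ← mul_assoc]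
  | case6 B C M h1 h2 ih =>
    have ih' := ih (fun D hD => hR D (by simp [hD]))
    simp only [insR, if_neg h1, if_neg h2]
    simp only [wProd_reverse_cons]
    rw [ih']
    have hcomm : Commute (ι x) (wB A I B) := commute_wB (not_dep_iff.1 h1)
    simp only [wProd_reverse_cons]
    rw [mul_assoc, hcomm.eq, ← mul_assoc]

lemma insR_high (x : A) {R : List (Finset A)} {m : ℕ}
    (hyp : ∃ y s, OccAt R y s ∧ m ≤ s ∧ ¬ I x y) :
    (∃ s, m + 1 ≤ s ∧ OccAt (insR I x R) x s) ∧
      (insR I x R).reverse.take (m + 1) = R.reverse.take (m + 1) := by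
  induction R using insR.induct I x with
  | case1 => obtain ⟨y, s, h, -, -⟩ := hyp; exact absurd h occAt_nil
  | case2 B hd =>
    obtain ⟨y, s, h, hm, hI⟩ := hyp
    rcases occAt_cons_cases h with ⟨rfl, hy⟩ | ⟨hs, h'⟩
    · simp only [List.length_nil] at hm
      have hm0 : m = 0 := by omega
      subst hm0
      simp only [insR, if_pos hd]
      constructor
      · refine ⟨1, le_refl _, ?_⟩
        have h1 : ([B] : List (Finset A)).length = 1 := rfl
        exact h1 ▸ occAt_cons_self (L := [B]) (Finset.mem_singleton_self x)
      · simp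
    · exact absurd h' occAt_nil
  | case3 B hd =>
    obtain ⟨y, s, h, hm, hI⟩ := hyp
    rcases occAt_cons_cases h with ⟨rfl, hy⟩ | ⟨hs, h'⟩
    · exact absurd ⟨y, hy, hI⟩ hd
    · exact absurd h' occAt_nil
  | case4 B C M hd =>
    obtain ⟨y, s, h, hm, hI⟩ := hyp
    have hs := occAt_lt_length h
    simp only [List.length_cons] at hs
    simp only [insR, if_pos hd]
    constructor
    · refine ⟨(B :: C :: M).length, by simp only [List.length_cons]; omega, ?_⟩
      exact occAt_cons_self (Finset.mem_singleton_self x)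
    · exact take_reverse_cons (by simp only [List.length_cons]; omega)
  | case5 B C M h1 h2 =>
    obtain ⟨y, s, h, hm, hI⟩ := hyp
    rcases occAt_cons_cases h with ⟨rfl, hy⟩ | ⟨hs, h'⟩
    · exact absurd ⟨y, hy, hI⟩ h1
    · simp only [List.length_cons] at hs
      simp only [insR, if_neg h1, if_pos h2]
      constructor
      · refine ⟨(C :: M).length, by simp only [List.length_cons]; omega, ?_⟩
        exact occAt_cons_self (Finset.mem_insert_self x B)
      · rw [take_reverse_cons (B := insert x B) (L := C :: M)
            (by simp only [List.length_cons]; omega),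
          take_reverse_cons (B := B) (L := C :: M) (by simp only [List.length_cons]; omega)]
  | case6 B C M h1 h2 ih =>
    obtain ⟨y, s, h, hm, hI⟩ := hyp
    rcases occAt_cons_cases h with ⟨rfl, hy⟩ | ⟨hs, h'⟩
    · exact absurd ⟨y, hy, hI⟩ h1
    · obtain ⟨⟨s', hs', hocc⟩, htake⟩ := ih ⟨y, s, h', hm, hI⟩
      simp only [List.length_cons] at hs
      have hlen := insR_length_le (I := I) x (C :: M)
      simp only [List.length_cons] at hlen
      simp only [insR, if_neg h1, if_neg h2]
      constructor
      · exact ⟨s', hs', occAt_cons hocc⟩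
      · rw [take_reverse_cons (B := B) (L := insR I x (C :: M)) (by omega),
          take_reverse_cons (B := B) (L := C :: M) (by simp only [List.length_cons]; omega),
          htake]
end InsLemmas
section Word
open Classical
variable {A : Type} {I : A → A → Prop}
local notation "ι" => traceOf A I

/-- insert a word letter by letter -/
noncomputable def insW (I : A → A → Prop) (R : List (Finset A)) (w : List A) :
    List (Finset A) :=
  w.foldl (fun R x => insR I x R) R

@[simp] lemma insW_nil (R : List (Finset A)) : insW I R [] = R := rfl

lemma insW_cons (R : List (Finset A)) (x : A) (w : List A) :
    insW I R (x :: w) = insW I (insR I x R) w := rfl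

lemma insW_append (R : List (Finset A)) (w₁ w₂ : List A) :
    insW I R (w₁ ++ w₂) = insW I (insW I R w₁) w₂ := List.foldl_append

lemma rfoata_insW (hsym : Symmetric I) (hirr : Irreflexive I) {R : List (Finset A)}
    (hR : RFoata A I R) (w : List A) : RFoata A I (insW I R w) := by
  induction w generalizing R with
  | nil => exact hR
  | cons x w ih => exact ih (rfoata_insR hsym hirr hR x)

lemma occAt_insW {R : List (Finset A)} {x : A} {s : ℕ} (h : OccAt R x s) (w : List A) :
    ∃ s', s ≤ s' ∧ OccAt (insW I R w) x s' := by
  induction w generalizing R s with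
  | nil => exact ⟨s, le_refl _, h⟩
  | cons y w ih =>
    obtain ⟨s₁, hs₁, h₁⟩ := occAt_insR y h
    obtain ⟨s₂, hs₂, h₂⟩ := ih h₁
    exact ⟨s₂, le_trans hs₁ hs₂, h₂⟩

lemma wProd_insW (hsym : Symmetric I) (hirr : Irreflexive I) {R : List (Finset A)}
    (hR : RFoata A I R) (w : List A) :
    wProd A I (insW I R w).reverse = wProd A I R.reverse * (w.map ι).prod := by
  induction w generalizing R with
  | nil => simp
  | cons x w ih =>
    rw [insW_cons, ih (rfoata_insR hsym hirr hR x), wProd_insR hirr hR.1 x]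
    simp [mul_assoc]

lemma rfoata_nil : RFoata A I [] := ⟨by simp, List.isChain_nil⟩

lemma mk'_eq_prod (w : FreeMonoid A) :
    (traceCon A I).mk' w = (((FreeMonoid.toList w).map ι)).prod := by
  induction w using FreeMonoid.recOn with
  | one => simp
  | of_mul x xs ih => rw [map_mul, ih]; simp [traceOf]

/-- every trace has a (reversed) Foata normal form -/
lemma exists_rfnf (hsym : Symmetric I) (hirr : Irreflexive I) (u : TraceMonoid A I) :
    ∃ R : List (Finset A), RFoata A I R ∧ wProd A I R.reverse = u := by
  obtain ⟨w, rfl⟩ := Con.mk'_surjective (c := traceCon A I) u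
  refine ⟨insW I [] (FreeMonoid.toList w), rfoata_insW hsym hirr rfoata_nil _, ?_⟩
  rw [wProd_insW hsym hirr rfoata_nil]
  simp [wProd, mk'_eq_prod w]

/-- forward Foata chain conditions -/
def FChain (A : Type) (I : A → A → Prop) (F : List (Finset A)) : Prop :=
  (∀ B ∈ F, IsClique A I B) ∧
    List.IsChain (fun X Y => ∀ a ∈ Y, ∃ b ∈ X, ¬ I a b) F

lemma fchain_of_rfoata {R : List (Finset A)} (h : RFoata A I R) : FChain A I R.reverse := by
  refine ⟨fun B hB => h.1 B (List.mem_reverse.1 hB), ?_⟩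
  rw [List.isChain_reverse]
  exact h.2

lemma rfoata_of_fchain {F : List (Finset A)} (h : FChain A I F) : RFoata A I F.reverse := by
  refine ⟨fun B hB => h.1 B (List.mem_reverse.1 hB), ?_⟩
  rw [List.isChain_reverse]
  exact h.2

lemma isFoataChain_iff_fchain {F : List (Finset A)} :
    IsFoataChain A I F ↔ FChain A I F := by
  unfold IsFoataChain FChain
  refine and_congr Iff.rfl ?_
  rw [List.isChain_iff_getElem]

/-- flatten a chain into a word -/
noncomputable def flat (F : List (Finset A)) : List A := (F.map Finset.toList).flatten

@[simp] lemma flat_nil : flat ([] : List (Finset A)) = [] := rfl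

lemma flat_cons (C : Finset A) (F : List (Finset A)) :
    flat (C :: F) = C.toList ++ flat F := rfl

lemma prod_map_flat (F : List (Finset A)) :
    ((flat F).map ι).prod = wProd A I F := by
  induction F with
  | nil => simp [wProd]
  | cons C F ih =>
    rw [flat_cons, List.map_append, List.prod_append, ih]
    simp [wProd, wB]

/-- inserting the letters of one block: all letters land at slot ≥ m,
occurrences persist, bottom m cliques unchanged -/
lemma insW_block {R : List (Finset A)} {m : ℕ} {l : List A}
    (hl : ∀ c ∈ l, m = 0 ∨ ∃ y s, OccAt R y s ∧ m ≤ s + 1 ∧ ¬ I c y) :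
    (∀ c ∈ l, ∃ s, m ≤ s ∧ OccAt (insW I R l) c s) ∧
    (insW I R l).reverse.take m = R.reverse.take m := by
  induction l generalizing R with
  | nil => exact ⟨by simp, rfl⟩
  | cons x l ih =>
    rw [insW_cons]
    have hx := hl x List.mem_cons_self
    have hocc_take : (∃ s, m ≤ s ∧ OccAt (insR I x R) x s) ∧
        (insR I x R).reverse.take m = R.reverse.take m := by
      rcases hx with rfl | ⟨y, s, hys, hms, hIxy⟩
      · obtain ⟨s, hs⟩ := occAt_insR_self (I := I) x R
        exact ⟨⟨s, Nat.zero_le s, hs⟩, by simp⟩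
      · rcases Nat.eq_zero_or_pos m with rfl | hm
        · obtain ⟨s', hs'⟩ := occAt_insR_self (I := I) x R
          exact ⟨⟨s', Nat.zero_le s', hs'⟩, by simp⟩
        · obtain ⟨⟨s', hs', hocc⟩, htake⟩ :=
            insR_high (m := m - 1) x ⟨y, s, hys, by omega, hIxy⟩
          have hm1 : m - 1 + 1 = m := by omega
          rw [hm1] at hs' htake
          exact ⟨⟨s', hs', hocc⟩, htake⟩
    obtain ⟨⟨s₀, hs₀, hocc₀⟩, htake₀⟩ := hocc_take
    have hl' : ∀ c ∈ l, m = 0 ∨ ∃ y s, OccAt (insR I x R) y s ∧ m ≤ s + 1 ∧ ¬ I c y := by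
      intro c hc
      rcases hl c (List.mem_cons_of_mem x hc) with h0 | ⟨y, s, hys, hms, hIcy⟩
      · exact Or.inl h0
      · obtain ⟨s', hs', hocc'⟩ := occAt_insR x hys
        exact Or.inr ⟨y, s', hocc', by omega, hIcy⟩
    obtain ⟨hlet, htake⟩ := ih hl'
    refine ⟨?_, htake.trans htake₀⟩
    intro c hc
    rcases List.mem_cons.1 hc with rfl | hc
    · obtain ⟨s', hs', hocc'⟩ := occAt_insW hocc₀ l
      exact ⟨s', le_trans hs₀ hs', hocc'⟩
    · exact hlet c hc

/-- inserting a whole trace through its Foata chain -/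
lemma insW_flat {R : List (Finset A)} {m : ℕ} {F : List (Finset A)}
    (hF : FChain A I F)
    (hhead : m = 0 ∨ ∀ C ∈ F.head?, ∀ c ∈ C, ∃ y s, OccAt R y s ∧ m ≤ s + 1 ∧ ¬ I c y) :
    (∀ C ∈ F, ∀ c ∈ C, ∃ s, m ≤ s ∧ OccAt (insW I R (flat F)) c s) ∧
    (insW I R (flat F)).reverse.take m = R.reverse.take m := by
  induction F generalizing R m with
  | nil => exact ⟨by simp, rfl⟩
  | cons C F ih =>
    rw [flat_cons, insW_append]
    have hblock : ∀ c ∈ C.toList, m = 0 ∨ ∃ y s, OccAt R y s ∧ m ≤ s + 1 ∧ ¬ I c y := by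
      intro c hc
      rcases hhead with h0 | hh
      · exact Or.inl h0
      · exact Or.inr (hh C (by simp) c (Finset.mem_toList.1 hc))
    obtain ⟨hlet, htake⟩ := insW_block hblock
    set R₁ := insW I R C.toList with hR₁
    have hF' : FChain A I F := ⟨fun B hB => hF.1 B (List.mem_cons_of_mem _ hB),
      (List.isChain_cons.1 hF.2).2⟩
    have hhead' : m + 1 = 0 ∨
        ∀ D ∈ F.head?, ∀ c ∈ D, ∃ y s, OccAt R₁ y s ∧ m + 1 ≤ s + 1 ∧ ¬ I c y := by
      refine Or.inr ?_
      intro D hD c hc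
      have hdep := (List.isChain_cons.1 hF.2).1 D hD c hc
      obtain ⟨b, hb, hIb⟩ := hdep
      obtain ⟨s, hs, hocc⟩ := hlet b (Finset.mem_toList.2 hb)
      exact ⟨b, s, hocc, by omega, hIb⟩
    obtain ⟨hlet', htake'⟩ := ih hF' hhead'
    constructor
    · intro D hD c hc
      rcases List.mem_cons.1 hD with rfl | hD
      · obtain ⟨s, hs, hocc⟩ := hlet c (Finset.mem_toList.2 hc)
        obtain ⟨s', hs', hocc'⟩ := occAt_insW hocc (flat F)
        exact ⟨s', le_trans hs hs', hocc'⟩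
      · obtain ⟨s, hs, hocc⟩ := hlet' D hD c hc
        exact ⟨s, by omega, hocc⟩
    · have h1 : (insW I R₁ (flat F)).reverse.take m =
          ((insW I R₁ (flat F)).reverse.take (m + 1)).take m := by
        rw [List.take_take]; congr 1; omega
      rw [h1, htake', ← htake]
      rw [List.take_take]
      congr 1
      omega
end Word
section Phi
open Classical
variable {A : Type} {I : A → A → Prop}
local notation "ι" => traceOf A I

lemma wProd_cons (C : Finset A) (F : List (Finset A)) :
    wProd A I (C :: F) = wB A I C * wProd A I F := by simp [wProd]

lemma mcont_traceOf (a : A) :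
    Multiplicative.toAdd (mcont A I (ι a)) = ({a} : Multiset A) := by
  rw [show ι a = (traceCon A I).mk' (.of a) from rfl, mcont_mk]
  simp

lemma mcont_wB (C : Finset A) :
    Multiplicative.toAdd (mcont A I (wB A I C)) = C.val := by
  rw [wB, ← List.prod_map_hom]
  have h0 : ∀ l : List A, Multiplicative.toAdd ((l.map (⇑(mcont A I) ∘ ι)).prod)
      = (l.map (fun a => ({a} : Multiset A))).sum := by
    intro l
    induction l with
    | nil => simp
    | cons x l ih => simp only [List.map_cons, List.prod_cons, toAdd_mul, ih,
        List.sum_cons, Function.comp_apply, mcont_traceOf]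
  rw [h0]
  rw [← Finset.coe_toList C]
  induction C.toList with
  | nil => simp
  | cons x l ih => simp [ih]

lemma mem_content_wProd {F : List (Finset A)} {x : A} :
    x ∈ content A I (wProd A I F) ↔ ∃ C ∈ F, x ∈ C := by
  induction F with
  | nil =>
    simp only [wProd, List.map_nil, List.prod_nil]
    constructor
    · intro h; exact absurd h content_one
    · rintro ⟨C, hC, -⟩; simp at hC
  | cons C F ih =>
    rw [wProd_cons, mem_content_iff, map_mul, toAdd_mul, Multiset.mem_add]
    constructor
    · rintro (h | h)
      · rw [mcont_wB] at h
        exact ⟨C, by simp, h⟩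
      · obtain ⟨D, hD, hx⟩ := ih.1 (mem_content_iff.2 h)
        exact ⟨D, List.mem_cons_of_mem _ hD, hx⟩
    · rintro ⟨D, hD, hx⟩
      rcases List.mem_cons.1 hD with rfl | hD
      · exact Or.inl (by rw [mcont_wB]; exact hx)
      · exact Or.inr (mem_content_iff.1 (ih.2 ⟨D, hD, hx⟩))

lemma exists_mem_content_of_ne_one {u : TraceMonoid A I} (hu : u ≠ 1) :
    ∃ x, x ∈ content A I u := by
  obtain ⟨w, rfl⟩ := Con.mk'_surjective (c := traceCon A I) u
  cases hw : FreeMonoid.toList w with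
  | nil =>
    exfalso
    apply hu
    have : w = 1 := by
      have := congrArg FreeMonoid.ofList hw
      simpa using this
    rw [this, map_one]
  | cons x l => exact ⟨x, w, rfl, by rw [hw]; exact List.mem_cons_self⟩

lemma tlen_one : tlen (1 : TraceMonoid A I) = 0 := by
  unfold tlen; rw [map_one]; simp

lemma tlen_wB (C : Finset A) : tlen (wB A I C) = C.card := by
  unfold tlen; rw [mcont_wB]; rfl

lemma tlen_wProd_ge {F : List (Finset A)} (h : ∀ C ∈ F, Finset.Nonempty C) :
    F.length ≤ tlen (wProd A I F) := by
  induction F with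
  | nil => simp
  | cons C F ih =>
    rw [wProd_cons, tlen_mul, tlen_wB]
    have h1 : 1 ≤ C.card := Finset.card_pos.2 (h C (by simp))
    have h2 := ih (fun D hD => h D (List.mem_cons_of_mem _ hD))
    simp only [List.length_cons]
    omega

variable (φ : Monoid.End (TraceMonoid A I))

open Classical in
/-- a chosen Foata normal form chain for `φ(a)` -/
noncomputable def Fch (a : A) : List (Finset A) :=
  if h : ∃ F, FChain A I F ∧ wProd A I F = φ (ι a) then h.choose else []

lemma Fch_spec (hsym : Symmetric I) (hirr : Irreflexive I) (a : A) :
    FChain A I (Fch φ a) ∧ wProd A I (Fch φ a) = φ (ι a) := by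
  have h : ∃ F, FChain A I F ∧ wProd A I F = φ (ι a) := by
    obtain ⟨R, hR, hprod⟩ := exists_rfnf hsym hirr (φ (ι a))
    exact ⟨R.reverse, fchain_of_rfoata hR, hprod⟩
  rw [Fch, dif_pos h]
  exact h.choose_spec

lemma Fch_prefix (hsym : Symmetric I) (hirr : Irreflexive I) {a : A} {C : Finset A}
    {F' : List (Finset A)} (hC : Fch φ a = C :: F') {c : A} (hc : c ∈ C) :
    ∃ w, φ (ι a) = ι c * w := by
  obtain ⟨hch, hprod⟩ := Fch_spec φ hsym hirr a
  rw [hC] at hch hprod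
  rw [← hprod, wProd_cons, wB_eq_of_mem (hch.1 C (by simp)) hc, mul_assoc]
  exact ⟨_, rfl⟩

lemma Fch_ne_one (hsym : Symmetric I) (hirr : Irreflexive I) {a : A}
    (h : φ (ι a) ≠ 1) : ∃ C F', Fch φ a = C :: F' := by
  cases hF : Fch φ a with
  | nil =>
    exfalso
    apply h
    have := (Fch_spec φ hsym hirr a).2
    rw [hF] at this
    simpa [wProd] using this.symm
  | cons C F' => exact ⟨C, F', rfl⟩

lemma key_dep
    (hcond : ∀ a b c : A, (∃ w : TraceMonoid A I, φ (traceOf A I b) = traceOf A I c * w) →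
      (∀ x ∈ content A I (φ (traceOf A I a)), I c x) → I a b)
    (hsym : Symmetric I) {a b c : A} (hab : ¬ I a b)
    (hc : ∃ w, φ (ι a) = ι c * w) :
    ∃ x ∈ content A I (φ (ι b)), ¬ I c x := by
  by_contra h
  push_neg at h
  exact hab (hsym (hcond b a c hc h))

/-- the word inserted in one stage -/
noncomputable def stageW (l : List A) : List A :=
  (l.map (fun a => flat (Fch φ a))).flatten

lemma stageW_nil : stageW φ ([] : List A) = [] := rfl

lemma stageW_cons (a : A) (l : List A) :
    stageW φ (a :: l) = flat (Fch φ a) ++ stageW φ l := rfl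

lemma stageW_prod (hsym : Symmetric I) (hirr : Irreflexive I) (l : List A) :
    (((stageW φ l).map ι)).prod = (l.map (fun a => φ (ι a))).prod := by
  induction l with
  | nil => simp [stageW_nil]
  | cons a l ih =>
    rw [stageW_cons, List.map_append, List.prod_append, ih, List.map_cons, List.prod_cons,
      prod_map_flat, (Fch_spec φ hsym hirr a).2]

/-- the key stage lemma: inserting the images of the letters of one clique -/
lemma stageL
    (hcond : ∀ a b c : A, (∃ w : TraceMonoid A I, φ (traceOf A I b) = traceOf A I c * w) →
      (∀ x ∈ content A I (φ (traceOf A I a)), I c x) → I a b)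
    (hsym : Symmetric I) (hirr : Irreflexive I) {R : List (Finset A)} {j : ℕ}
    {l : List A}
    (hprev : ∀ a ∈ l, j = 0 ∨ ∃ b, ¬ I a b ∧
      (∀ x ∈ content A I (φ (ι b)), ∃ s, j - 1 ≤ s ∧ OccAt R x s)) :
    (∀ a ∈ l, ∀ x ∈ content A I (φ (ι a)), ∃ s, j ≤ s ∧ OccAt (insW I R (stageW φ l)) x s) ∧
    (insW I R (stageW φ l)).reverse.take j = R.reverse.take j := by
  induction l generalizing R with
  | nil => exact ⟨by simp, rfl⟩
  | cons a l ih =>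
    rw [stageW_cons, insW_append]
    have hhead : j = 0 ∨ ∀ C ∈ (Fch φ a).head?, ∀ c ∈ C,
        ∃ y s, OccAt R y s ∧ j ≤ s + 1 ∧ ¬ I c y := by
      rcases hprev a List.mem_cons_self with h0 | ⟨b, hab, hb⟩
      · exact Or.inl h0
      · refine Or.inr ?_
        intro C hC c hc
        cases hF : Fch φ a with
        | nil => rw [hF] at hC; simp at hC
        | cons C0 F' =>
          rw [hF] at hC
          simp only [List.head?_cons, Option.mem_def, Option.some.injEq] at hC
          subst hC
          obtain ⟨x, hx, hIcx⟩ :=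
            key_dep φ hcond hsym hab (Fch_prefix φ hsym hirr hF hc)
          obtain ⟨s, hs, hocc⟩ := hb x hx
          exact ⟨x, s, hocc, by omega, hIcx⟩
    obtain ⟨hlet, htake⟩ := insW_flat (Fch_spec φ hsym hirr a).1 hhead
    set R₁ := insW I R (flat (Fch φ a)) with hR₁
    have hprev' : ∀ a' ∈ l, j = 0 ∨ ∃ b, ¬ I a' b ∧
        (∀ x ∈ content A I (φ (ι b)), ∃ s, j - 1 ≤ s ∧ OccAt R₁ x s) := by
      intro a' ha'
      rcases hprev a' (List.mem_cons_of_mem a ha') with h0 | ⟨b, hab, hb⟩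
      · exact Or.inl h0
      · refine Or.inr ⟨b, hab, ?_⟩
        intro x hx
        obtain ⟨s, hs, hocc⟩ := hb x hx
        obtain ⟨s', hs', hocc'⟩ := occAt_insW hocc (flat (Fch φ a))
        exact ⟨s', by omega, hocc'⟩
    obtain ⟨ihlet, ihtake⟩ := ih hprev'
    refine ⟨?_, ihtake.trans htake⟩
    intro a' ha' x hx
    rcases List.mem_cons.1 ha' with rfl | ha'
    · have hx' : ∃ C ∈ Fch φ a', x ∈ C := by
        rw [← mem_content_wProd]
        rw [(Fch_spec φ hsym hirr a').2]
        exact hx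
      obtain ⟨C, hC, hxC⟩ := hx'
      obtain ⟨s, hs, hocc⟩ := hlet C hC x hxC
      obtain ⟨s', hs', hocc'⟩ := occAt_insW hocc (stageW φ l)
      exact ⟨s', by omega, hocc'⟩
    · exact ihlet a' ha' x hx
end Phi
section Build
open Classical
variable {A : Type} {I : A → A → Prop}
local notation "ι" => traceOf A I

variable (φ : Monoid.End (TraceMonoid A I))

/-- build the Foata normal form of `φ(w_{B₁}⋯w_{B_p})` stage by stage -/
noncomputable def build (L : List (Finset A)) : List (Finset A) :=
  L.foldl (fun R B => insW I R (stageW φ B.toList)) []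

lemma build_take_succ {L : List (Finset A)} {i : ℕ} (hi : i < L.length) :
    build φ (L.take (i + 1)) =
      insW I (build φ (L.take i)) (stageW φ (L.getD i ∅).toList) := by
  unfold build
  rw [List.take_succ, List.getElem?_eq_getElem hi, List.getD_eq_getElem L ∅ hi]
  rw [Option.toList_some, List.foldl_append]
  rfl

lemma phi_wB (B : Finset A) :
    φ (wB A I B) = (B.toList.map (fun a => φ (ι a))).prod := by
  rw [wB, map_list_prod, List.map_map]
  rfl

lemma main_build
    (hcond : ∀ a b c : A, (∃ w : TraceMonoid A I, φ (traceOf A I b) = traceOf A I c * w) →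
      (∀ x ∈ content A I (φ (traceOf A I a)), I c x) → I a b)
    (hsym : Symmetric I) (hirr : Irreflexive I)
    {L : List (Finset A)} (hL : IsFoataChain A I L) :
    ∀ i, i ≤ L.length →
      RFoata A I (build φ (L.take i)) ∧
      wProd A I (build φ (L.take i)).reverse = φ (wProd A I (L.take i)) ∧
      (∀ j, j < i → ∀ a ∈ L.getD j ∅, ∀ x ∈ content A I (φ (ι a)),
        ∃ s, j ≤ s ∧ OccAt (build φ (L.take i)) x s) ∧
      (∀ m, m ≤ i → (build φ (L.take i)).reverse.take m =
        (build φ (L.take m)).reverse.take m) := by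
  intro i
  induction i with
  | zero =>
    intro _
    refine ⟨rfoata_nil, ?_, by omega, ?_⟩
    · simp [build, wProd]
    · intro m hm
      interval_cases m
      rfl
  | succ i ih =>
    intro hi1
    have hi : i < L.length := by omega
    obtain ⟨hRF, hprod, hocc, hstab⟩ := ih (by omega)
    set R := build φ (L.take i) with hR
    set B := L.getD i ∅ with hB
    have hprev : ∀ a ∈ B.toList, i = 0 ∨ ∃ b, ¬ I a b ∧
        (∀ x ∈ content A I (φ (ι b)), ∃ s, i - 1 ≤ s ∧ OccAt R x s) := by
      intro a ha
      rcases Nat.eq_zero_or_pos i with rfl | hipos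
      · exact Or.inl rfl
      · refine Or.inr ?_
        have hidx : (i - 1) + 1 < L.length := by omega
        have hmem : a ∈ L[(i - 1) + 1] := by
          have : (i - 1) + 1 = i := by omega
          rw [show L[(i-1)+1] = L[i] from by congr 1]
          rw [← List.getD_eq_getElem L ∅ hi, ← hB]
          exact Finset.mem_toList.1 ha
        obtain ⟨b, hb, hIab⟩ := hL.2 (i - 1) hidx a hmem
        refine ⟨b, hIab, ?_⟩
        intro x hx
        have hb' : b ∈ L.getD (i - 1) ∅ := by
          rw [List.getD_eq_getElem L ∅ (by omega : i - 1 < L.length)]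
          exact hb
        exact hocc (i - 1) (by omega) b hb' x hx
    obtain ⟨hlet, htake⟩ := stageL φ hcond hsym hirr (R := R) (j := i) hprev
    rw [build_take_succ φ hi, ← hR, ← hB]
    refine ⟨rfoata_insW hsym hirr hRF _, ?_, ?_, ?_⟩
    · rw [wProd_insW hsym hirr hRF, hprod, stageW_prod φ hsym hirr, ← phi_wB]
      rw [List.take_succ, List.getElem?_eq_getElem hi, ← List.getD_eq_getElem L ∅ hi, ← hB]
      simp only [Option.toList_some, wProd_append, map_mul]
      simp [wProd, wB]
    · intro j hj a ha x hx
      rcases Nat.lt_or_ge j i with hji | hji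
      · obtain ⟨s, hs, hocc'⟩ := hocc j hji a ha x hx
        obtain ⟨s', hs', hocc''⟩ := occAt_insW hocc' (stageW φ B.toList)
        exact ⟨s', by omega, hocc''⟩
      · have hj2 : j = i := by omega
        subst hj2
        obtain ⟨s, hs, hocc'⟩ := hlet a (Finset.mem_toList.2 ha) x hx
        exact ⟨s, hs, hocc'⟩
    · intro m hm
      rcases Nat.lt_or_ge m (i + 1) with hmi | hmi
      · have hm' : m ≤ i := by omega
        have h1 : (insW I R (stageW φ B.toList)).reverse.take m =
            ((insW I R (stageW φ B.toList)).reverse.take i).take m := by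
          rw [List.take_take]
          congr 1
          omega
        rw [h1, htake, List.take_take, show m ⊓ i = m from by omega, hstab m hm']
      · have : m = i + 1 := by omega
        subst this
        rw [build_take_succ φ hi, ← hR, ← hB]
end Build
section Final
open Classical
variable {A : Type} {I : A → A → Prop}
local notation "ι" => traceOf A I

lemma dead_prop (φ : Monoid.End (TraceMonoid A I))
    (hcond : ∀ a b c : A, (∃ w : TraceMonoid A I, φ (traceOf A I b) = traceOf A I c * w) →
      (∀ x ∈ content A I (φ (traceOf A I a)), I c x) → I a b)
    (hsym : Symmetric I) (hirr : Irreflexive I)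
    {L : List (Finset A)} (hL : IsFoataChain A I L) {i₀ : ℕ}
    (hdead : ∀ a ∈ L.getD i₀ ∅, φ (ι a) = 1) :
    ∀ i, i₀ ≤ i → i < L.length → ∀ a ∈ L.getD i ∅, φ (ι a) = 1 := by
  intro i hi
  induction i, hi using Nat.le_induction with
  | base => intro _; exact hdead
  | succ i hi ih =>
    intro hi1 a ha
    by_contra hne
    obtain ⟨C, F', hF⟩ := Fch_ne_one φ hsym hirr hne
    have hCcl : IsClique A I C := by
      refine (Fch_spec φ hsym hirr a).1.1 C ?_
      rw [hF]; exact List.mem_cons_self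
    obtain ⟨c, hc⟩ := hCcl.1
    have hpre := Fch_prefix φ hsym hirr hF hc
    have hidx : i + 1 < L.length := hi1
    have hmem : a ∈ L[i + 1] := by
      rw [← List.getD_eq_getElem L ∅ hidx]
      exact ha
    obtain ⟨b, hb, hIab⟩ := hL.2 i hidx a hmem
    obtain ⟨x, hx, -⟩ := key_dep φ hcond hsym hIab hpre
    have hb1 : φ (ι b) = 1 := by
      refine ih (by omega) b ?_
      rw [List.getD_eq_getElem L ∅ (by omega : i < L.length)]
      exact hb
    rw [hb1] at hx
    exact content_one hx
end Final

theorem r_apply_prefix_ge' (A : Type) [Fintype A] (I : A → A → Prop)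
    (hsym : Symmetric I) (hirr : Irreflexive I)
    (φ : Monoid.End (TraceMonoid A I))
    (hcond : ∀ a b c : A, (∃ w : TraceMonoid A I, φ (traceOf A I b) = traceOf A I c * w) →
      (∀ x ∈ content A I (φ (traceOf A I a)), I c x) → I a b) :
    ∀ (L : List (Finset A)) (u : TraceMonoid A I) (k : ℕ),
      IsFNF A I L u → k ≤ L.length →
        (k : ℕ∞) ≤ rE A I (φ (wProd A I (L.take k))) (φ u) := by
  classical
  intro L u k hFNF hk
  rcases Nat.eq_zero_or_pos k with rfl | hkpos
  · simp
  have hu : u = wProd A I L := hFNF.2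
  have hL : IsFoataChain A I L := hFNF.1
  set len := L.length with hlen
  by_cases hdead : ∀ a ∈ L.getD (k - 1) ∅, φ (traceOf A I a) = 1
  · -- all later stages are erased by φ, so the two traces are equal
    have hdp := dead_prop φ hcond hsym hirr hL hdead
    have hconst : ∀ m, k ≤ m → m ≤ len → φ (wProd A I (L.take m)) = φ (wProd A I (L.take k)) := by
      intro m hm
      induction m, hm using Nat.le_induction with
      | base => intro _; rfl
      | succ m hm ih =>
        intro hm1
        have hmlt : m < len := by omega
        rw [List.take_succ, List.getElem?_eq_getElem hmlt, Option.toList_some,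
          wProd_append, map_mul, ih (by omega)]
        have hBdead : φ (wB A I (L[m])) = 1 := by
          rw [phi_wB]
          refine List.prod_eq_one ?_
          intro y hy
          simp only [List.mem_map] at hy
          obtain ⟨a, ha, rfl⟩ := hy
          refine hdp m (by omega) hmlt a ?_
          rw [List.getD_eq_getElem L ∅ hmlt]
          exact Finset.mem_toList.1 ha
        have : wProd A I [L[m]] = wB A I (L[m]) := by simp [wProd]
        rw [this, hBdead, mul_one]
    have heq : φ (wProd A I (L.take k)) = φ u := by
      have h := hconst len hk (le_refl _)
      rw [List.take_length] at h
      rw [hu]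
      exact h.symm
    rw [rE, if_pos heq]
    exact le_top
  · -- the live case: use the constructed normal forms
    push_neg at hdead
    obtain ⟨a₀, ha₀, ha₀ne⟩ := hdead
    have hmain := main_build φ hcond hsym hirr hL
    obtain ⟨hRFk, hprodk, hocck, -⟩ := hmain k hk
    obtain ⟨hRFp, hprodp, -, hstabp⟩ := hmain len (le_refl _)
    set Mk := build φ (L.take k) with hMk
    set Mp := build φ (L.take len) with hMp
    -- Mk has length ≥ k
    obtain ⟨x₀, hx₀⟩ := exists_mem_content_of_ne_one ha₀ne
    obtain ⟨s₀, hs₀, hocc₀⟩ := hocck (k - 1) (by omega) a₀ ha₀ x₀ hx₀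
    have hlenMk : k ≤ Mk.length := by
      have := occAt_lt_length hocc₀
      omega
    set P := Mk.reverse.take k with hP
    set Lu := Mk.reverse.drop k with hLu
    set Lv := Mp.reverse.drop k with hLv
    have hPLu : P ++ Lu = Mk.reverse := List.take_append_drop _ _
    have hstab : Mp.reverse.take k = P := hstabp k hk
    have hPLv : P ++ Lv = Mp.reverse := by rw [← hstab]; exact List.take_append_drop _ _
    have hlenP : P.length = k := by
      rw [hP, List.length_take, List.length_reverse]
      omega
    have hfnf1 : IsFNF A I (P ++ Lu) (φ (wProd A I (L.take k))) := by
      rw [hPLu]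
      exact ⟨isFoataChain_iff_fchain.2 (fchain_of_rfoata hRFk), hprodk.symm⟩
    have hfnf2 : IsFNF A I (P ++ Lv) (φ u) := by
      rw [hPLv]
      refine ⟨isFoataChain_iff_fchain.2 (fchain_of_rfoata hRFp), ?_⟩
      have hp2 := hprodp
      rw [List.take_length] at hp2
      rw [hu]
      exact hp2.symm
    by_cases h12 : φ (wProd A I (L.take k)) = φ u
    · rw [rE, if_pos h12]; exact le_top
    · rw [rE, if_neg h12]
      rw [Nat.cast_le]
      refine le_csSup ?_ ⟨P, Lu, Lv, hlenP, hfnf1, hfnf2⟩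
      refine ⟨tlen (φ (wProd A I (L.take k))), ?_⟩
      rintro k' ⟨P', Lu', Lv', hlen', hfnf1', hfnf2'⟩
      have h1 : φ (wProd A I (L.take k)) = wProd A I (P' ++ Lu') := hfnf1'.2
      have h2 : (P' ++ Lu').length ≤ tlen (wProd A I (P' ++ Lu')) := by
        refine tlen_wProd_ge ?_
        intro C hC
        exact (hfnf1'.1.1 C hC).1
      rw [h1]
      have : k' ≤ (P' ++ Lu').length := by
        rw [List.length_append, hlen']
        omega
      omega
/-- If an endomorphism `φ` of `M(A,I)` satisfies: for all letters `a,b,c`, `c` a prefix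
of `φ(b)` and `c ∼_I φ(a)` imply `(a,b) ∈ I`, and `w_{B₁}⋯w_{B_p}` is a Foata normal
form, then for every `k ≤ p` we have `r(φ(w_{B₁}⋯w_{B_k}), φ(w_{B₁}⋯w_{B_p})) ≥ k`. -/
theorem r_apply_prefix_ge (A : Type) [Fintype A] (I : A → A → Prop)
    (hsym : Symmetric I) (hirr : Irreflexive I)
    (φ : Monoid.End (TraceMonoid A I))
    (hcond : ∀ a b c : A, (∃ w : TraceMonoid A I, φ (traceOf A I b) = traceOf A I c * w) →
      (∀ x ∈ content A I (φ (traceOf A I a)), I c x) → I a b) :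
    ∀ (L : List (Finset A)) (u : TraceMonoid A I) (k : ℕ),
      IsFNF A I L u → k ≤ L.length →
        (k : ℕ∞) ≤ rE A I (φ (wProd A I (L.take k))) (φ u) := by
  exact r_apply_prefix_ge' A I hsym hirr φ hcond
end

section
/- Let (A,I) be a finite independence alphabet and write Δ_A = {(a,a) : a ∈ A}. Then I ∪ Δ_A is a transitive relation on A if and only if the trace monoid M(A,I) is isomorphic to the free product (monoid coproduct) of the free commutative monoids on A₁, …, A_r, where A₁, …, A_r are the connected components of the graph Γ(A,I) with vertex set A and edge set I. -/
/-- The independence graph `Γ(A,I)`: vertices `A`, with `a` and `b` adjacent iff they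
are distinct and independent. (For symmetric `I`, `I a b ∧ I b a` is just `I a b`.) -/
def indepGraph (A : Type) (I : A → A → Prop) : SimpleGraph A where
  Adj a b := a ≠ b ∧ I a b ∧ I b a
  symm := ⟨fun _ _ ⟨h1, h2, h3⟩ => ⟨h1.symm, h3, h2⟩⟩
  loopless := ⟨fun _ ⟨h, _⟩ => h rfl⟩

section Generic
variable {B : Type} {J : B → B → Prop}

/-- Lift a letter map with commuting images to a hom on the trace monoid. -/
def traceHom {N : Type*} [Monoid N] (F : B → N)
    (hF : ∀ a b, J a b → F a * F b = F b * F a) : TraceMonoid B J →* N :=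
  Con.lift _ (FreeMonoid.lift F) (Con.conGen_le.mpr (by
    rintro x y ⟨a, b, hab, rfl, rfl⟩
    show FreeMonoid.lift F _ = FreeMonoid.lift F _
    simp only [map_mul, FreeMonoid.lift_eval_of]
    exact hF a b hab))

@[simp] theorem traceHom_traceOf {N : Type*} [Monoid N] (F : B → N)
    (hF : ∀ a b, J a b → F a * F b = F b * F a) (a : B) :
    traceHom F hF (traceOf B J a) = F a := rfl

theorem traceHom_ext {N : Type*} [Monoid N] {f g : TraceMonoid B J →* N}
    (h : ∀ a, f (traceOf B J a) = g (traceOf B J a)) : f = g := by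
  have h2 : f.comp (traceCon B J).mk' = g.comp (traceCon B J).mk' := FreeMonoid.hom_eq h
  refine MonoidHom.ext fun x => ?_
  obtain ⟨w, rfl⟩ := Con.mk'_surjective x
  exact DFunLike.congr_fun h2 w

theorem trace_comm {a b : B} (h : J a b) :
    traceOf B J a * traceOf B J b = traceOf B J b * traceOf B J a := by
  show (traceCon B J).mk' (.of a) * (traceCon B J).mk' (.of b) =
    (traceCon B J).mk' (.of b) * (traceCon B J).mk' (.of a)
  rw [← map_mul, ← map_mul]
  exact (traceCon B J).eq.mpr (ConGen.Rel.of _ _ ⟨a, b, h, rfl, rfl⟩)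

/-- The length homomorphism. -/
def traceLength : TraceMonoid B J →* Multiplicative ℕ :=
  traceHom (fun _ => Multiplicative.ofAdd 1) (fun _ _ _ => mul_comm _ _)

theorem traceLength_mk (w : FreeMonoid B) :
    traceLength ((traceCon B J).mk' w) = Multiplicative.ofAdd w.toList.length := by
  induction w using FreeMonoid.recOn with
  | one => rfl
  | of_mul x xs ih =>
    rw [map_mul, map_mul, ih]
    show traceLength (traceOf B J x) * _ = _
    rw [traceLength, traceHom_traceOf, ← ofAdd_add]
    congr 1
    simp [FreeMonoid.toList_mul, Nat.add_comm]

theorem mk_eq_one {w : FreeMonoid B} (h : (traceCon B J).mk' w = 1) : w = 1 := by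
  have := congrArg traceLength h
  rw [traceLength_mk, map_one] at this
  have hl : w.toList.length = 0 := by simpa using this
  have : w.toList = [] := List.length_eq_zero_iff.mp hl
  exact FreeMonoid.toList.injective this

theorem traceOf_ne_one (a : B) : traceOf B J a ≠ 1 := by
  intro h
  have := mk_eq_one h
  simpa using congrArg FreeMonoid.toList this

theorem traceOf_injective : Function.Injective (traceOf B J) := by
  intro a b h
  have := congrArg (traceHom (fun x => Multiplicative.ofAdd (Finsupp.single x (1:ℕ)))
    (fun _ _ _ => mul_comm _ _)) h
  simp only [traceHom_traceOf] at this
  have h2 : Finsupp.single a (1:ℕ) = Finsupp.single b 1 := this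
  exact Finsupp.single_left_injective one_ne_zero h2

/-- atoms -/
def IsAtomM {M : Type*} [Monoid M] (x : M) : Prop :=
  x ≠ 1 ∧ ∀ y z, x = y * z → y = 1 ∨ z = 1

theorem isAtomM_iff {x : TraceMonoid B J} : IsAtomM x ↔ ∃ a, x = traceOf B J a := by
  constructor
  · rintro ⟨hne, hsplit⟩
    obtain ⟨w, rfl⟩ := Con.mk'_surjective x
    induction w using FreeMonoid.recOn with
    | one => exact absurd (map_one _) hne
    | of_mul a xs _ =>
      rcases hsplit (traceOf B J a) ((traceCon B J).mk' xs) (map_mul _ _ _) with h | h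
      · exact absurd h (traceOf_ne_one a)
      · exact ⟨a, by rw [map_mul, h, mul_one]; rfl⟩
  · rintro ⟨a, rfl⟩
    refine ⟨traceOf_ne_one a, ?_⟩
    intro y z hyz
    obtain ⟨u, rfl⟩ := Con.mk'_surjective y
    obtain ⟨v, rfl⟩ := Con.mk'_surjective z
    have hyz' : (traceCon B J).mk' (FreeMonoid.of a) = (traceCon B J).mk' (u * v) := by
      rw [map_mul]; exact hyz
    have := congrArg traceLength hyz'
    rw [traceLength_mk, traceLength_mk] at this
    have hlen : (1:ℕ) = u.toList.length + v.toList.length := by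
      simpa [FreeMonoid.toList_mul, FreeMonoid.toList_of] using congrArg Multiplicative.toAdd this
    rcases Nat.eq_zero_or_pos u.toList.length with h | h
    · left
      have : u = 1 := FreeMonoid.toList.injective (List.length_eq_zero_iff.mp h)
      rw [this, map_one]
    · right
      have hv : v.toList.length = 0 := by omega
      have : v = 1 := FreeMonoid.toList.injective (List.length_eq_zero_iff.mp hv)
      rw [this, map_one]

theorem comm_iff (hsym : Symmetric J) (hirr : Irreflexive J) (a b : B) :
    traceOf B J a * traceOf B J b = traceOf B J b * traceOf B J a ↔ (J a b ∨ a = b) := by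
  classical
  constructor
  · intro h
    by_cases hab : a = b
    · exact Or.inr hab
    left
    by_contra hJ
    set F : B → FreeMonoid Bool := fun x =>
      if x = a then FreeMonoid.of true else if x = b then FreeMonoid.of false else 1 with hFdef
    have hF : ∀ c d, J c d → F c * F d = F d * F c := by
      intro c d hcd
      have hcd' : c ≠ d := fun h => hirr c (h ▸ hcd)
      by_cases hc : c = a
      · have hd1 : d ≠ a := fun h => hcd' (hc.trans h.symm)
        have hd2 : d ≠ b := by intro h; rw [hc, h] at hcd; exact hJ hcd
        simp [hFdef, hc, hd1, hd2]
      · by_cases hc' : c = b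
        · have hd1 : d ≠ a := by intro h; rw [hc', h] at hcd; exact hJ (hsym hcd)
          have hd2 : d ≠ b := fun h => hcd' (hc'.trans h.symm)
          simp [hFdef, hc', hc, hd1, hd2]
        · simp [hFdef, hc, hc']
    have := congrArg (traceHom F hF) h
    simp only [map_mul, traceHom_traceOf] at this
    have hb : b ≠ a := fun h => hab h.symm
    rw [hFdef] at this
    simp only [if_pos rfl, if_neg hb] at this
    have := congrArg FreeMonoid.toList this
    simp [FreeMonoid.toList_of] at this
  · rintro (h | rfl)
    · exact trace_comm h
    · rfl

end Generic

section Comp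
variable (A : Type) (I : A → A → Prop)

abbrev TFiber (c : (indepGraph A I).ConnectedComponent) : Type :=
  {a : A // (indepGraph A I).connectedComponentMk a = c}

abbrev TSig : Type := Σ c : (indepGraph A I).ConnectedComponent, TFiber A I c

def TSigRel : TSig A I → TSig A I → Prop := fun x y => x.1 = y.1 ∧ x ≠ y

theorem TSigRel_symm : Symmetric (TSigRel A I) :=
  fun _ _ h => ⟨h.1.symm, h.2.symm⟩

theorem TSigRel_irrefl : Irreflexive (TSigRel A I) := fun _ h => h.2 rfl

theorem TSigRel_trans :
    Transitive (fun x y : TSig A I => TSigRel A I x y ∨ x = y) := by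
  intro x y z h1 h2
  have e1 : x.1 = y.1 := by rcases h1 with h | rfl; exacts [h.1, rfl]
  have e2 : y.1 = z.1 := by rcases h2 with h | rfl; exacts [h.1, rfl]
  by_cases hxz : x = z
  · exact Or.inr hxz
  · exact Or.inl ⟨e1.trans e2, hxz⟩

variable {A I}

theorem clique (ht : Transitive (fun a b : A => I a b ∨ a = b))
    {a b : A} (h : (indepGraph A I).Reachable a b) (hne : a ≠ b) : I a b := by
  have key : ∀ {a b : A} (_ : (indepGraph A I).Walk a b), a = b ∨ I a b := by
    intro a b p
    induction p with
    | nil => exact Or.inl rfl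
    | @cons a x b h q ih =>
      have hax : I a x := (h : a ≠ x ∧ I a x ∧ I x a).2.1
      rcases ih with rfl | hxb
      · exact Or.inr hax
      · rcases ht (Or.inl hax) (Or.inl hxb) with h | h
        · exact Or.inr h
        · exact Or.inl h
  rcases key h.some with rfl | h
  · exact absurd rfl hne
  · exact h

end Comp

section Iso1
variable {A : Type} {I : A → A → Prop}

theorem tsig_ne_of_ne {x y : TSig A I} (h : x.2.1 ≠ y.2.1) : x ≠ y :=
  fun he => h (congrArg (fun z : TSig A I => z.2.1) he)

/-- forward hom -/
def trIso1 (hsym : Symmetric I) (hirr : Irreflexive I)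
    (ht : Transitive (fun a b : A => I a b ∨ a = b)) :
    TraceMonoid A I ≃* TraceMonoid (TSig A I) (TSigRel A I) := by
  refine MonoidHom.toMulEquiv
    (traceHom (fun a => traceOf (TSig A I) (TSigRel A I)
        ⟨(indepGraph A I).connectedComponentMk a, ⟨a, rfl⟩⟩) ?_)
    (traceHom (fun x => traceOf A I x.2.1) ?_) ?_ ?_
  · intro a b hab
    refine trace_comm ⟨?_, ?_⟩
    · exact SimpleGraph.ConnectedComponent.connectedComponentMk_eq_of_adj
        (show a ≠ b ∧ I a b ∧ I b a from ⟨fun h => hirr a (h ▸ hab), hab, hsym hab⟩)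
    · have hne : a ≠ b := fun h => hirr a (h ▸ hab)
      exact tsig_ne_of_ne hne
  · rintro ⟨c, u, hu⟩ ⟨c', v, hv⟩ ⟨h1, h2⟩
    dsimp only at *
    subst h1
    have huv : u ≠ v := by rintro rfl; exact h2 rfl
    have hreach : (indepGraph A I).Reachable u v :=
      (SimpleGraph.ConnectedComponent.eq).mp (hu.trans hv.symm)
    exact trace_comm (clique ht hreach huv)
  · refine traceHom_ext fun a => ?_
    simp [MonoidHom.comp_apply]
  · refine traceHom_ext fun x => ?_
    obtain ⟨c, u, hu⟩ := x
    subst hu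
    simp [MonoidHom.comp_apply]

end Iso1

section FinsuppHom

/-- Lift a map into a commutative monoid to `Multiplicative (α →₀ ℕ)`. -/
noncomputable def finsuppHom {α : Type} {N : Type*} [CommMonoid N] (g : α → N) :
    Multiplicative (α →₀ ℕ) →* N :=
  AddMonoidHom.toMultiplicativeLeft
    (Finsupp.liftAddHom (fun a => multiplesHom (Additive N) (Additive.ofMul (g a))))

@[simp] theorem finsuppHom_single {α : Type} {N : Type*} [CommMonoid N] (g : α → N) (a : α) :
    finsuppHom g (Multiplicative.ofAdd (Finsupp.single a 1)) = g a := by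
  simp [finsuppHom, AddMonoidHom.coe_toMultiplicativeLeft, Finsupp.liftAddHom_apply_single,
    multiplesHom_apply]

end FinsuppHom

section Iso2
variable (A : Type) (I : A → A → Prop)

abbrev TFam : (indepGraph A I).ConnectedComponent → Type :=
  fun c => Multiplicative (TFiber A I c →₀ ℕ)

/-- The target coproduct. -/
abbrev TCoprod : Type := Monoid.CoprodI (TFam A I)

noncomputable def trF : TraceMonoid (TSig A I) (TSigRel A I) →* TCoprod A I :=
  traceHom (fun x => Monoid.CoprodI.of (M := TFam A I) (Multiplicative.ofAdd (Finsupp.single x.2 1)))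
    (by
      rintro ⟨c, u⟩ ⟨c', v⟩ ⟨h1, h2⟩
      dsimp only at *
      subst h1
      have h3 : (Multiplicative.ofAdd (Finsupp.single u (1:ℕ))) *
          (Multiplicative.ofAdd (Finsupp.single v (1:ℕ))) =
          (Multiplicative.ofAdd (Finsupp.single v (1:ℕ))) *
          (Multiplicative.ofAdd (Finsupp.single u (1:ℕ))) := mul_comm _ _
      rw [← map_mul, h3, map_mul])

@[simp] theorem trF_traceOf (x : TSig A I) :
    trF A I (traceOf (TSig A I) (TSigRel A I) x) =
      Monoid.CoprodI.of (M := TFam A I) (Multiplicative.ofAdd (Finsupp.single x.2 1)) := rfl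

def tGenSet (c : (indepGraph A I).ConnectedComponent) :
    Set (TraceMonoid (TSig A I) (TSigRel A I)) :=
  Set.range (fun u : TFiber A I c => traceOf (TSig A I) (TSigRel A I) ⟨c, u⟩)

abbrev tCommMon (c : (indepGraph A I).ConnectedComponent) :
    CommMonoid (Submonoid.closure (tGenSet A I c)) :=
  Submonoid.closureCommMonoidOfComm _ (s := tGenSet A I c) (by
    rintro x ⟨u, rfl⟩ y ⟨v, rfl⟩
    by_cases h : u = v
    · subst h; rfl
    · exact trace_comm ⟨rfl, fun he => h (sigma_mk_injective he)⟩)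

noncomputable def tphi (c : (indepGraph A I).ConnectedComponent) :
    Multiplicative (TFiber A I c →₀ ℕ) →* TraceMonoid (TSig A I) (TSigRel A I) :=
  letI : CommMonoid (Submonoid.closure (tGenSet A I c)) := tCommMon A I c
  (Submonoid.closure (tGenSet A I c)).subtype.comp
    (finsuppHom (fun u => (⟨traceOf (TSig A I) (TSigRel A I) ⟨c, u⟩,
        Submonoid.subset_closure ⟨u, rfl⟩⟩ : Submonoid.closure (tGenSet A I c))))

@[simp] theorem tphi_single (c : (indepGraph A I).ConnectedComponent) (u : TFiber A I c) :
    tphi A I c (Multiplicative.ofAdd (Finsupp.single u 1)) =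
      traceOf (TSig A I) (TSigRel A I) ⟨c, u⟩ := by
  letI : CommMonoid (Submonoid.closure (tGenSet A I c)) := tCommMon A I c
  rw [tphi, MonoidHom.comp_apply, finsuppHom_single]
  rfl

noncomputable def trG : TCoprod A I →* TraceMonoid (TSig A I) (TSigRel A I) :=
  Monoid.CoprodI.lift (tphi A I)

theorem trF_tphi (c : (indepGraph A I).ConnectedComponent) (x : TFiber A I c →₀ ℕ) :
    trF A I (tphi A I c (Multiplicative.ofAdd x)) =
      Monoid.CoprodI.of (M := TFam A I) (Multiplicative.ofAdd x) := by
  induction x using Finsupp.induction with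
  | zero =>
    rw [show Multiplicative.ofAdd (0 : TFiber A I c →₀ ℕ) = 1 from rfl]
    simp
  | single_add u n rest hsupp hn ih =>
    rw [ofAdd_add, map_mul, map_mul, ih]
    have hs : Multiplicative.ofAdd (Finsupp.single u n) =
        (Multiplicative.ofAdd (Finsupp.single u 1)) ^ n := by
      rw [← ofAdd_nsmul]
      congr 1
      simp [Finsupp.smul_single]
    rw [hs, map_pow, map_pow, tphi_single, trF_traceOf, map_mul, map_pow]

noncomputable def trIso2 : TraceMonoid (TSig A I) (TSigRel A I) ≃* TCoprod A I := by
  refine MonoidHom.toMulEquiv (trF A I) (trG A I) ?_ ?_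
  · refine traceHom_ext fun x => ?_
    obtain ⟨c, u⟩ := x
    simp [MonoidHom.comp_apply, trG, Monoid.CoprodI.lift_of]
  · refine Monoid.CoprodI.ext_hom _ _ fun c => ?_
    refine MonoidHom.ext fun m => ?_
    simp only [MonoidHom.comp_apply, MonoidHom.id_apply]
    rw [trG, Monoid.CoprodI.lift_of]
    simpa using trF_tphi A I c (Multiplicative.toAdd m)

end Iso2

section Transfer
variable {B B' : Type} {J : B → B → Prop} {J' : B' → B' → Prop}

theorem trans_of_iso (hsymJ : Symmetric J) (hirrJ : Irreflexive J)
    (hsymJ' : Symmetric J') (hirrJ' : Irreflexive J')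
    (e : TraceMonoid B J ≃* TraceMonoid B' J')
    (ht' : Transitive fun a b : B' => J' a b ∨ a = b) :
    Transitive fun a b : B => J a b ∨ a = b := by
  classical
  have hatom : ∀ a : B, ∃ a', e (traceOf B J a) = traceOf B' J' a' := by
    intro a
    have h1 : IsAtomM (traceOf B J a) := isAtomM_iff.mpr ⟨a, rfl⟩
    have h2 : IsAtomM (e (traceOf B J a)) := by
      constructor
      · intro h
        exact h1.1 (by have := congrArg e.symm h; simpa using this)
      · intro y z hyz
        have := h1.2 (e.symm y) (e.symm z) (by
          apply e.injective; simpa [map_mul] using hyz)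
        rcases this with h | h
        · left; have := congrArg e h; simpa using this
        · right; have := congrArg e h; simpa using this
    exact isAtomM_iff.mp h2
  choose f hf using hatom
  have hcomm : ∀ a b : B, (J a b ∨ a = b) ↔ (J' (f a) (f b) ∨ f a = f b) := by
    intro a b
    rw [← comm_iff hsymJ hirrJ, ← comm_iff hsymJ' hirrJ']
    constructor
    · intro h
      rw [← hf, ← hf, ← map_mul, ← map_mul, h]
    · intro h
      apply e.injective
      rw [map_mul, map_mul, hf, hf, h]
  intro a b c hab hbc
  exact (hcomm a c).mpr (ht' ((hcomm a b).mp hab) ((hcomm b c).mp hbc))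

end Transfer


/-- `I ∪ Δ_A` is transitive iff the trace monoid `M(A,I)` is isomorphic to the free
product (monoid coproduct) of the free commutative monoids on the connected
components of `Γ(A,I)`. -/
theorem transitive_iff_coprod_of_freeComm (A : Type) [Fintype A] (I : A → A → Prop)
    (hsym : Symmetric I) (hirr : Irreflexive I) :
    Transitive (fun a b : A => I a b ∨ a = b) ↔
      Nonempty (TraceMonoid A I ≃*
        Monoid.CoprodI (fun c : (indepGraph A I).ConnectedComponent =>
          Multiplicative ({a : A // (indepGraph A I).connectedComponentMk a = c} →₀ ℕ))) := by
  constructor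
  · intro ht
    exact ⟨(trIso1 hsym hirr ht).trans (trIso2 A I)⟩
  · rintro ⟨e⟩
    exact trans_of_iso hsym hirr (TSigRel_symm A I) (TSigRel_irrefl A I)
      (e.trans (trIso2 A I).symm) (TSigRel_trans A I)
end

section
/- Let M = ℕ^k be a free commutative monoid of finite rank and let φ be a monoid endomorphism of M whose only fixed point is 0. Then for every u ∈ M, the set {x ∈ M : u + φ(x) = x} is finite. -/
/-- Let `M = ℕ^k` be a free commutative monoid of finite rank and let `φ` be a monoid
endomorphism of `M` whose only fixed point is `0`. Then for every `u ∈ M`, the set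
`{x ∈ M : u + φ(x) = x}` is finite. -/
theorem finite_solutions_of_fix_trivial (k : ℕ)
    (φ : (Fin k → ℕ) →+ (Fin k → ℕ))
    (hfix : ∀ x : Fin k → ℕ, φ x = x → x = 0) :
    ∀ u : Fin k → ℕ, {x : Fin k → ℕ | u + φ x = x}.Finite := by
  intro u
  -- φ is monotone
  have hmono : ∀ a b : Fin k → ℕ, a ≤ b → φ a ≤ φ b := by
    intro a b hab
    obtain ⟨c, rfl⟩ := le_iff_exists_add.mp hab
    rw [map_add]
    exact le_self_add
  -- iterates are additive
  have hadd : ∀ (n : ℕ) (a b : Fin k → ℕ),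
      (⇑φ)^[n] (a + b) = (⇑φ)^[n] a + (⇑φ)^[n] b := by
    intro n
    induction n with
    | zero => intro a b; simp
    | succ m ih =>
      intro a b
      simp [Function.iterate_succ_apply', ih, map_add]
  -- iterates kill zero
  have hz : ∀ n : ℕ, (⇑φ)^[n] (0 : Fin k → ℕ) = 0 := by
    intro n
    induction n with
    | zero => simp
    | succ m ih => simp [Function.iterate_succ_apply', ih, map_zero]
  -- once an iterate is 0, all later iterates are 0
  have hzero : ∀ (x : Fin k → ℕ) (n m : ℕ), n ≤ m → (⇑φ)^[n] x = 0 → (⇑φ)^[m] x = 0 := by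
    intro x n m hnm h0
    have : (⇑φ)^[(m - n) + n] x = 0 := by
      rw [Function.iterate_add_apply, h0, hz]
    rwa [Nat.sub_add_cancel hnm] at this
  -- for any solution, some iterate vanishes
  have key : ∀ x : Fin k → ℕ, u + φ x = x → ∃ n, (⇑φ)^[n] x = 0 := by
    intro x hx
    have hφx : φ x ≤ x := by
      conv_rhs => rw [← hx]
      exact le_add_self
    have hstep : ∀ n, (⇑φ)^[n + 1] x ≤ (⇑φ)^[n] x := by
      intro n
      induction n with
      | zero => simpa using hφx
      | succ m ih =>
        have h := hmono _ _ ih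
        rw [← Function.iterate_succ_apply' (⇑φ) (m + 1) x,
          ← Function.iterate_succ_apply' (⇑φ) m x] at h
        exact h
    set g : ℕ → ℕ := fun n => ∑ i, (⇑φ)^[n] x i with hg
    have hgle : ∀ n, g (n + 1) ≤ g n := fun n =>
      Finset.sum_le_sum fun i _ => hstep n i
    have hex : ∃ n, g (n + 1) = g n := by
      by_contra h
      push_neg at h
      have hlt : ∀ n, g (n + 1) < g n := fun n => lt_of_le_of_ne (hgle n) (h n)
      have hbd : ∀ n, g n + n ≤ g 0 := by
        intro n
        induction n with
        | zero => simp
        | succ m ih => have := hlt m; omega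
      have := hbd (g 0 + 1)
      omega
    obtain ⟨n, hn⟩ := hex
    refine ⟨n, hfix _ ?_⟩
    have heq : (⇑φ)^[n + 1] x = (⇑φ)^[n] x := by
      by_contra hne
      have : ∃ i ∈ Finset.univ, (⇑φ)^[n + 1] x i < (⇑φ)^[n] x i := by
        by_contra hc
        push_neg at hc
        apply hne
        funext i
        exact le_antisymm (hstep n i) (hc i (Finset.mem_univ i))
      exact absurd hn (ne_of_lt (Finset.sum_lt_sum (fun i _ => hstep n i) this))
    rw [← Function.iterate_succ_apply' (⇑φ) n x]
    exact heq
  -- every solution equals the partial sums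
  have hsum : ∀ x : Fin k → ℕ, u + φ x = x → ∀ n : ℕ,
      x = (∑ i ∈ Finset.range n, (⇑φ)^[i] u) + (⇑φ)^[n] x := by
    intro x hx n
    induction n with
    | zero => simp
    | succ m ih =>
      have h1 : (⇑φ)^[m] x = (⇑φ)^[m] u + (⇑φ)^[m + 1] x := by
        conv_lhs => rw [← hx]
        rw [hadd, ← Function.iterate_succ_apply]
      rw [Finset.sum_range_succ]
      calc x = (∑ i ∈ Finset.range m, (⇑φ)^[i] u) + (⇑φ)^[m] x := ih
        _ = (∑ i ∈ Finset.range m, (⇑φ)^[i] u) + ((⇑φ)^[m] u + (⇑φ)^[m + 1] x) := by rw [h1]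
        _ = ((∑ i ∈ Finset.range m, (⇑φ)^[i] u) + (⇑φ)^[m] u) + (⇑φ)^[m + 1] x := by
            rw [add_assoc]
  -- the solution set is a subsingleton, hence finite
  apply Set.Subsingleton.finite
  intro x hx y hy
  simp only [Set.mem_setOf_eq] at hx hy
  obtain ⟨n, hn⟩ := key x hx
  obtain ⟨m, hm⟩ := key y hy
  have hNx : (⇑φ)^[max n m] x = 0 := hzero x n _ (le_max_left n m) hn
  have hNy : (⇑φ)^[max n m] y = 0 := hzero y m _ (le_max_right n m) hm
  have := hsum x hx (max n m)
  have h2 := hsum y hy (max n m)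
  rw [hNx, add_zero] at this
  rw [hNy, add_zero] at h2
  rw [this, h2]
end
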